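/- Under the conditions of the previous statement, additionally assume J satisfies the smoothness bound J(π') ≤ J(π) + ⟨∇J(π), π' − π⟩ + (L/2)‖π' − π‖² for all π, π' in the neighborhood, with L > 0 and δ ≤ L. Then the single-step gradient iteration π^{t+1} = π^t + η∇̃F(π^t) with step size η = δ/L satisfies J(π^{t+1}) ≤ (1 − δ²/(2L)) J(π^t), and consequently J(π^t) ≤ (1 − δ²/(2L))^t J(π^0), i.e., the squared gradient norm decreases geometrically (assuming all iterates remain in the neighborhood). -/

import Mathlib

open RealInnerProductSpace

/-- Geometric convergence of the single-step gradient method near a saddle point: under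
the saddle conditions (`F` is `C²` on a convex neighborhood `U` of `πs` with
`∇F(πs) = 0`, `∇²_θ F ⪰ δ I`, `∇²_ω F ⪯ -δ I`), if additionally `J = ½‖∇F‖²` satisfies
the smoothness bound `J(π') ≤ J(π) + ⟨∇J(π), π' - π⟩ + (L/2)‖π' - π‖²` on `U` (with
`∇J = ∇²F ∇F`), `0 < δ ≤ L`, then the iteration `π^{t+1} = π^t + η ∇̃F(π^t)` with step
size `η = δ/L` (whose iterates remain in `U`) satisfies
`J(π^t) ≤ (1 - δ²/(2L))^t J(π^0)`. -/
theorem single_step_gradient_geometric_convergence (n m : ℕ)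
    (F : EuclideanSpace ℝ (Fin n ⊕ Fin m) → ℝ)
    (U : Set (EuclideanSpace ℝ (Fin n ⊕ Fin m))) (hU : IsOpen U) (hUc : Convex ℝ U)
    (g : EuclideanSpace ℝ (Fin n ⊕ Fin m) → EuclideanSpace ℝ (Fin n ⊕ Fin m))
    (H : EuclideanSpace ℝ (Fin n ⊕ Fin m) →
      (EuclideanSpace ℝ (Fin n ⊕ Fin m) →L[ℝ] EuclideanSpace ℝ (Fin n ⊕ Fin m)))
    (δ L : ℝ) (hδ : 0 < δ) (hL : 0 < L) (hδL : δ ≤ L)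
    (hF : ContDiffOn ℝ 2 F U)
    (hg : ∀ π ∈ U, HasGradientAt F (g π) π)
    (hH : ∀ π ∈ U, HasFDerivAt g (H π) π)
    (πs : EuclideanSpace ℝ (Fin n ⊕ Fin m)) (hπs : πs ∈ U) (hcrit : g πs = 0)
    (hθ : ∀ π ∈ U, ∀ v : EuclideanSpace ℝ (Fin n ⊕ Fin m),
      (∀ i : Fin m, v (Sum.inr i) = 0) → δ * ‖v‖ ^ 2 ≤ ⟪H π v, v⟫)
    (hω : ∀ π ∈ U, ∀ v : EuclideanSpace ℝ (Fin n ⊕ Fin m),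
      (∀ i : Fin n, v (Sum.inl i) = 0) → ⟪H π v, v⟫ ≤ -(δ * ‖v‖ ^ 2))
    (hsmooth : ∀ π ∈ U, ∀ π' ∈ U,
      (1 : ℝ) / 2 * ‖g π'‖ ^ 2
        ≤ 1 / 2 * ‖g π‖ ^ 2 + ⟪H π (g π), π' - π⟫ + L / 2 * ‖π' - π‖ ^ 2)
    (seq : ℕ → EuclideanSpace ℝ (Fin n ⊕ Fin m))
    (hmem : ∀ t : ℕ, seq t ∈ U)
    (hstep : ∀ t : ℕ, seq (t + 1) = seq t + (δ / L) •
      (EuclideanSpace.equiv (Fin n ⊕ Fin m) ℝ).symm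
        (Sum.elim (fun i => -(g (seq t) (Sum.inl i))) (fun i => g (seq t) (Sum.inr i)))) :
    ∀ t : ℕ, (1 : ℝ) / 2 * ‖g (seq t)‖ ^ 2
      ≤ (1 - δ ^ 2 / (2 * L)) ^ t * ((1 : ℝ) / 2 * ‖g (seq 0)‖ ^ 2) := by
    classical
  -- Symmetry of the Hessian `H` on `U`
  have hsymm : ∀ x ∈ U, ∀ v w : EuclideanSpace ℝ (Fin n ⊕ Fin m),
      ⟪H x v, w⟫ = ⟪H x w, v⟫ := by
    intro x hx v w
    have h1 : ∀ᶠ y in nhds x, HasFDerivAt F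
        (InnerProductSpace.toDual ℝ (EuclideanSpace ℝ (Fin n ⊕ Fin m)) (g y)) y := by
      filter_upwards [hU.mem_nhds hx] with y hy using (hg y hy).hasFDerivAt
    have h2 : HasFDerivAt
        (fun y => InnerProductSpace.toDual ℝ (EuclideanSpace ℝ (Fin n ⊕ Fin m)) (g y))
        (((InnerProductSpace.toDual ℝ
            (EuclideanSpace ℝ (Fin n ⊕ Fin m))).toContinuousLinearEquiv.toContinuousLinearMap).comp
          (H x)) x :=
      ((InnerProductSpace.toDual ℝ
        (EuclideanSpace ℝ (Fin n ⊕ Fin m))).toContinuousLinearEquiv.toContinuousLinearMap.hasFDerivAt).comp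
        x (hH x hx)
    have h3 := second_derivative_symmetric_of_eventually h1 h2 v w
    simp only [ContinuousLinearMap.coe_comp', Function.comp_apply,
      ContinuousLinearEquiv.coe_coe, LinearIsometryEquiv.coe_toContinuousLinearEquiv,
      InnerProductSpace.toDual_apply_apply] at h3
    exact h3
  -- single step contraction
  have key : ∀ t : ℕ, (1 : ℝ) / 2 * ‖g (seq (t + 1))‖ ^ 2
      ≤ (1 - δ ^ 2 / (2 * L)) * ((1 : ℝ) / 2 * ‖g (seq t)‖ ^ 2) := by
    intro t
    set x := seq t with hx
    set v := g x with hv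
    set u : EuclideanSpace ℝ (Fin n ⊕ Fin m) :=
      WithLp.toLp 2 (fun i => Sum.elim (fun j => v (Sum.inl j)) (fun _ => 0) i) with hu
    set w : EuclideanSpace ℝ (Fin n ⊕ Fin m) :=
      WithLp.toLp 2 (fun i => Sum.elim (fun _ => (0:ℝ)) (fun j => v (Sum.inr j)) i) with hw
    have hvuw : v = u + w := by
      ext i; cases i <;> simp [hu, hw]
    have horth : ⟪u, w⟫ = 0 := by
      rw [PiLp.inner_apply]
      apply Finset.sum_eq_zero
      intro i _
      cases i <;> simp [hu, hw]
    have hnorm : ‖u‖ ^ 2 + ‖w‖ ^ 2 = ‖v‖ ^ 2 := by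
      rw [hvuw, norm_add_sq_real, horth]; ring
    have htilde : (EuclideanSpace.equiv (Fin n ⊕ Fin m) ℝ).symm
        (Sum.elim (fun i => -(v (Sum.inl i))) (fun i => v (Sum.inr i))) = w - u := by
      ext i; cases i <;> simp [hu, hw]
    have horth' : ⟪w, u⟫ = 0 := by rw [real_inner_comm]; exact horth
    have hnt : ‖w - u‖ ^ 2 = ‖v‖ ^ 2 := by
      rw [norm_sub_sq_real, horth', ← hnorm]; ring
    -- descent inequality
    have hHu : δ * ‖u‖ ^ 2 ≤ ⟪H x u, u⟫ := by
      apply hθ x (hmem t) u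
      intro i; simp [hu]
    have hHw : ⟪H x w, w⟫ ≤ -(δ * ‖w‖ ^ 2) := by
      apply hω x (hmem t) w
      intro i; simp [hw]
    have hdesc : ⟪H x v, w - u⟫ ≤ -(δ * ‖v‖ ^ 2) := by
      have hexp : ⟪H x v, w - u⟫ = ⟪H x w, w⟫ - ⟪H x u, u⟫ := by
        rw [hvuw, map_add, inner_add_left, inner_sub_right, inner_sub_right,
          hsymm x (hmem t) u w]
        ring
      rw [hexp, ← hnorm]
      nlinarith
    -- use the smoothness bound
    have hstep' : seq (t + 1) - x = (δ / L) • (w - u) := by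
      rw [hstep t, ← htilde]; abel
    have hsm := hsmooth x (hmem t) (seq (t + 1)) (hmem (t + 1))
    rw [← hv] at hsm
    rw [hstep'] at hsm
    rw [inner_smul_right, norm_smul] at hsm
    have hηpos : (0:ℝ) < δ / L := div_pos hδ hL
    have h5 : δ / L * ⟪H x v, w - u⟫ ≤ δ / L * (-(δ * ‖v‖ ^ 2)) :=
      mul_le_mul_of_nonneg_left hdesc (le_of_lt hηpos)
    have h6 : ‖(δ / L : ℝ)‖ = δ / L := by
      rw [Real.norm_eq_abs, abs_of_pos hηpos]
    rw [h6] at hsm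
    have h7 : (δ / L * ‖w - u‖) ^ 2 = (δ / L) ^ 2 * ‖v‖ ^ 2 := by
      rw [mul_pow, hnt]
    rw [h7] at hsm
    have hgoal : (1 : ℝ) / 2 * ‖g (seq (t + 1))‖ ^ 2
        ≤ 1 / 2 * ‖v‖ ^ 2 + δ / L * (-(δ * ‖v‖ ^ 2)) + L / 2 * ((δ / L) ^ 2 * ‖v‖ ^ 2) :=
      le_trans hsm (by linarith)
    have e1 : (1:ℝ) / 2 * ‖v‖ ^ 2 + δ / L * (-(δ * ‖v‖ ^ 2)) + L / 2 * ((δ / L) ^ 2 * ‖v‖ ^ 2)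
        = 1 / 2 * ‖v‖ ^ 2 - δ ^ 2 / (2 * L) * ‖v‖ ^ 2 := by
      field_simp
      ring
    rw [e1] at hgoal
    have hd : (0:ℝ) ≤ δ ^ 2 / (2 * L) * ‖v‖ ^ 2 := by positivity
    calc (1 : ℝ) / 2 * ‖g (seq (t + 1))‖ ^ 2
        ≤ 1 / 2 * ‖v‖ ^ 2 - δ ^ 2 / (2 * L) * ‖v‖ ^ 2 := hgoal
      _ ≤ (1 - δ ^ 2 / (2 * L)) * ((1 : ℝ) / 2 * ‖v‖ ^ 2) := by
          have e2 : (1 - δ ^ 2 / (2 * L)) * ((1 : ℝ) / 2 * ‖v‖ ^ 2)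
              = 1 / 2 * ‖v‖ ^ 2 - δ ^ 2 / (2 * L) * ‖v‖ ^ 2 / 2 := by ring
          rw [e2]
          linarith [hd]
  -- induction
  by_cases hc0 : (0:ℝ) ≤ 1 - δ ^ 2 / (2 * L)
  · intro t
    induction t with
    | zero => simp
    | succ t ih =>
      calc (1 : ℝ) / 2 * ‖g (seq (t + 1))‖ ^ 2
          ≤ (1 - δ ^ 2 / (2 * L)) * ((1 : ℝ) / 2 * ‖g (seq t)‖ ^ 2) := key t
        _ ≤ (1 - δ ^ 2 / (2 * L)) * ((1 - δ ^ 2 / (2 * L)) ^ t * ((1 : ℝ) / 2 * ‖g (seq 0)‖ ^ 2)) :=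
            mul_le_mul_of_nonneg_left ih hc0
        _ = (1 - δ ^ 2 / (2 * L)) ^ (t + 1) * ((1 : ℝ) / 2 * ‖g (seq 0)‖ ^ 2) := by ring
  · -- if the factor is negative, every `J (seq t)` must be zero
    push_neg at hc0
    have hall : ∀ t : ℕ, (1 : ℝ) / 2 * ‖g (seq t)‖ ^ 2 = 0 := by
      intro t
      have h1 := key t
      have h2 : (0:ℝ) ≤ 1 / 2 * ‖g (seq (t + 1))‖ ^ 2 := by positivity
      have h3 : (0:ℝ) ≤ 1 / 2 * ‖g (seq t)‖ ^ 2 := by positivity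
      have h4 : (1 - δ ^ 2 / (2 * L)) * ((1:ℝ) / 2 * ‖g (seq t)‖ ^ 2) ≤ 0 :=
        mul_nonpos_of_nonpos_of_nonneg (by linarith) h3
      have h5 : (1 - δ ^ 2 / (2 * L)) * ((1:ℝ) / 2 * ‖g (seq t)‖ ^ 2) = 0 :=
        le_antisymm h4 (le_trans h2 h1)
      rcases mul_eq_zero.1 h5 with h | h
      · exact absurd h (by intro h'; linarith)
      · exact h
    intro t
    rw [hall t, hall 0]
    simp
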